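/- Let n ≥ 2 and let I₁, …, I_{n−1} : ℝⁿ → ℝ be twice continuously differentiable functions. Define the vector field l : ℝⁿ → ℝⁿ whose i-th component is l_i(x) = (−1)^{i+1} det M_i(x), where M_i(x) is the (n−1)×(n−1) matrix obtained from the Jacobian matrix (∂I_k/∂x_j)_{1≤k≤n−1, 1≤j≤n} by deleting its i-th column. Then div l = Σᵢ ∂l_i/∂x_i = 0 at every point of ℝⁿ. -/

import Mathlib

lemma val_succAbove' {n : ℕ} (i : Fin (n+1)) (j : Fin n) :
    ((i.succAbove j : Fin (n+1)) : ℕ) = if (j:ℕ) < (i:ℕ) then (j:ℕ) else (j:ℕ)+1 := by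
  rw [Fin.succAbove]
  split_ifs with h1 h2 h2 <;>
    simp_all [Fin.lt_def, Fin.castSucc, Fin.succ, Fin.castAdd, Fin.castLE]

lemma val_predAbove' {n : ℕ} (p : Fin n) (i : Fin (n+1)) :
    ((p.predAbove i : Fin n) : ℕ) = if (p:ℕ) < (i:ℕ) then (i:ℕ)-1 else (i:ℕ) := by
  rcases lt_or_ge (p.castSucc) i with h | h
  · rw [Fin.predAbove_of_castSucc_lt _ _ h, Fin.coe_pred,
      if_pos (by simpa [Fin.lt_def] using h)]
  · rw [Fin.predAbove_of_le_castSucc _ _ h, Fin.coe_castPred,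
      if_neg (by simpa [Fin.le_def, not_lt] using h)]

section pairs
variable {m : ℕ}

lemma pair1 (i : Fin (m+2)) (j : Fin (m+1)) :
    (i.succAbove j).succAbove (j.predAbove i) = i := by
  have h1 : (j:ℕ) < m+1 := j.isLt
  have h2 : (i:ℕ) < m+2 := i.isLt
  apply Fin.ext
  rw [val_succAbove', val_succAbove', val_predAbove']
  split_ifs <;> omega

lemma pair4 (i : Fin (m+2)) (j : Fin (m+1)) :
    (j.predAbove i).predAbove (i.succAbove j) = j := by
  have h1 : (j:ℕ) < m+1 := j.isLt
  have h2 : (i:ℕ) < m+2 := i.isLt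
  apply Fin.ext
  rw [val_predAbove', val_succAbove', val_predAbove']
  split_ifs <;> omega

lemma pair2 (i : Fin (m+2)) (j : Fin (m+1)) (q : Fin m) :
    i.succAbove (j.succAbove q) = (i.succAbove j).succAbove ((j.predAbove i).succAbove q) := by
  have h1 : (j:ℕ) < m+1 := j.isLt
  have h2 : (i:ℕ) < m+2 := i.isLt
  have h3 : (q:ℕ) < m := q.isLt
  apply Fin.ext
  rw [val_succAbove', val_succAbove', val_succAbove', val_succAbove', val_succAbove',
    val_predAbove']
  split_ifs <;> omega

lemma pair3 (i : Fin (m+2)) (j : Fin (m+1)) :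
    (-1:ℝ)^((i:ℕ)+(j:ℕ)) = -(-1:ℝ)^(((i.succAbove j):ℕ)+((j.predAbove i):ℕ)) := by
  have h1 : (j:ℕ) < m+1 := j.isLt
  have h2 : (i:ℕ) < m+2 := i.isLt
  have key : (i:ℕ)+(j:ℕ)+1 = ((i.succAbove j):ℕ)+((j.predAbove i):ℕ) ∨
      ((i.succAbove j):ℕ)+((j.predAbove i):ℕ)+1 = (i:ℕ)+(j:ℕ) := by
    rw [val_succAbove', val_predAbove']
    split_ifs <;> omega
  rcases key with h | h
  · rw [← h, pow_succ]; ring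
  · rw [← h, pow_succ]; ring

end pairs

open Matrix Finset

lemma det_updateRow_expand {m : ℕ} (M : Matrix (Fin m) (Fin m) ℝ) (k : Fin m) (r : Fin m → ℝ) :
    (M.updateRow k r).det =
      ∑ σ : Equiv.Perm (Fin m), ((Equiv.Perm.sign σ : ℤ) : ℝ) *
        (r (σ⁻¹ k) * ∏ c ∈ Finset.univ.erase (σ⁻¹ k), M (σ c) c) := by
  rw [Matrix.det_apply']
  refine Finset.sum_congr rfl fun σ _ => ?_
  congr 1
  rw [← Finset.mul_prod_erase Finset.univ _ (Finset.mem_univ (σ⁻¹ k))]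
  congr 1
  · rw [Equiv.Perm.coe_inv, Equiv.apply_symm_apply, Matrix.updateRow_self]
  · refine Finset.prod_congr rfl fun c hc => ?_
    rw [Matrix.updateRow_apply, if_neg]
    intro h
    exact (Finset.mem_erase.mp hc).1 (by rw [← h, Equiv.Perm.coe_inv, Equiv.symm_apply_apply])

lemma sumB {m : ℕ} (M : Matrix (Fin m) (Fin m) ℝ) (w : Fin m → Fin m → ℝ) :
    ∑ σ : Equiv.Perm (Fin m), ((Equiv.Perm.sign σ : ℤ) : ℝ) *
        ∑ c : Fin m, (∏ j ∈ Finset.univ.erase c, M (σ j) j) * w (σ c) c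
      = ∑ k : Fin m, (M.updateRow k (w k)).det := by
  simp_rw [det_updateRow_expand]
  rw [Finset.sum_comm]
  refine Finset.sum_congr rfl fun σ _ => ?_
  rw [Finset.mul_sum]
  rw [← Equiv.sum_comp σ
    (fun k => ((Equiv.Perm.sign σ : ℤ) : ℝ) * (w k (σ⁻¹ k) * ∏ c ∈ Finset.univ.erase (σ⁻¹ k), M (σ c) c))]
  refine Finset.sum_congr rfl fun c _ => ?_
  simp only [Equiv.Perm.coe_inv, Equiv.symm_apply_apply]
  ring

lemma hasFDerivAt_det' {E : Type*} [NormedAddCommGroup E] [NormedSpace ℝ E] {m : ℕ}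
    {A : E → Matrix (Fin m) (Fin m) ℝ} {A' : Fin m → Fin m → E →L[ℝ] ℝ} {x : E}
    (hA : ∀ k j, HasFDerivAt (fun y => A y k j) (A' k j) x) :
    HasFDerivAt (fun y => (A y).det)
      (∑ σ : Equiv.Perm (Fin m), ((Equiv.Perm.sign σ : ℤ) : ℝ) •
        ∑ c : Fin m, (∏ j ∈ Finset.univ.erase c, A x (σ j) j) • A' (σ c) c) x := by
  have h : (fun y => (A y).det) =
      fun y => ∑ σ : Equiv.Perm (Fin m), ((Equiv.Perm.sign σ : ℤ) : ℝ) * ∏ c, A y (σ c) c := by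
    funext y; rw [Matrix.det_apply']
  rw [h]
  apply HasFDerivAt.fun_sum
  intro σ _
  exact (HasFDerivAt.finset_prod (fun c _ => hA (σ c) c)).const_mul _

lemma fderiv_det_apply {E : Type*} [NormedAddCommGroup E] [NormedSpace ℝ E] {m : ℕ}
    {A : E → Matrix (Fin m) (Fin m) ℝ} {A' : Fin m → Fin m → E →L[ℝ] ℝ} {x : E}
    (hA : ∀ k j, HasFDerivAt (fun y => A y k j) (A' k j) x) (v : E) :
    fderiv ℝ (fun y => (A y).det) x v
      = ∑ k : Fin m, ((A x).updateRow k (fun j => A' k j v)).det := by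
  rw [(hasFDerivAt_det' hA).fderiv, ← sumB]
  simp [Finset.sum_apply, ContinuousLinearMap.sum_apply, ContinuousLinearMap.smul_apply,
    Finset.mul_sum, smul_eq_mul]

lemma keyC {m : ℕ} (J : Matrix (Fin (m+1)) (Fin (m+2)) ℝ) (k : Fin (m+1))
    (g : Fin (m+2) → Fin (m+2) → ℝ) (hg : ∀ a b, g a b = g b a) :
    ∑ i : Fin (m+2), (-1:ℝ)^(i:ℕ) * ((J.updateRow k (g i)).submatrix id i.succAbove).det = 0 := by
  have hdet : ∀ i : Fin (m+2),
      ((J.updateRow k (g i)).submatrix id i.succAbove).det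
        = ∑ j : Fin (m+1), (-1:ℝ)^((k:ℕ)+(j:ℕ)) * g i (i.succAbove j) *
            (Matrix.of fun r q : Fin m => J (k.succAbove r) (i.succAbove (j.succAbove q))).det := by
    intro i
    rw [Matrix.det_succ_row _ k]
    refine Finset.sum_congr rfl fun j _ => ?_
    congr 1
    · congr 1
      simp [Matrix.submatrix_apply, Matrix.updateRow_self]
    · congr 1
      ext r q
      simp [Matrix.submatrix_apply, Matrix.updateRow_apply, Fin.succAbove_ne k r]
  simp_rw [hdet, Finset.mul_sum]
  rw [← Finset.sum_product']
  refine Finset.sum_ninvolution (fun p => (p.1.succAbove p.2, p.2.predAbove p.1)) ?_ ?_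
    (fun _ => Finset.mem_univ _) ?_
  · rintro ⟨i, j⟩
    simp only
    have e1 : (i.succAbove j).succAbove (j.predAbove i) = i := pair1 i j
    have e2 : ∀ q, i.succAbove (j.succAbove q)
        = (i.succAbove j).succAbove ((j.predAbove i).succAbove q) := pair2 i j
    have e3 := pair3 i j
    have hgg : g (i.succAbove j) ((i.succAbove j).succAbove (j.predAbove i)) = g i (i.succAbove j) := by
      rw [e1, hg]
    have hDD : (Matrix.of fun r q : Fin m =>
          J (k.succAbove r) ((i.succAbove j).succAbove ((j.predAbove i).succAbove q))).det
        = (Matrix.of fun r q : Fin m => J (k.succAbove r) (i.succAbove (j.succAbove q))).det := by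
      congr 1; ext r q; simp only [Matrix.of_apply]; rw [← e2]
    simp only [hgg, hDD]
    linear_combination ((-1:ℝ)^(k:ℕ) * g i (i.succAbove j) *
      (Matrix.of fun r q : Fin m => J (k.succAbove r) (i.succAbove (j.succAbove q))).det) * e3
  · rintro ⟨i, j⟩ _
    simp only [ne_eq, Prod.mk.injEq, not_and]
    intro h; exact absurd h (Fin.succAbove_ne i j)
  · rintro ⟨i, j⟩
    simp only [Prod.mk.injEq]
    exact ⟨pair1 i j, pair4 i j⟩


/-- Theorem 1 of the paper: the Nambu phase flow determined by `n - 1` Hamiltonians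
`I₁, …, I_{n-1} : ℝⁿ → ℝ` is divergence-free.  Here the dimension is `n + 1` (with
`1 ≤ n`, i.e. dimension at least `2`), and there are `n` twice continuously
differentiable functions `I k : ℝ^{n+1} → ℝ`.  The vector field `l` has `i`-th
component `(-1)^i · det Mᵢ`, where `Mᵢ` is obtained from the Jacobian matrix
`(∂I k/∂x j)` by deleting the `i`-th column (signs written for 0-based indices,
matching `(-1)^{i+1}` for 1-based indices). -/
theorem nambu_flow_divergence_free (n : ℕ) (hn : 1 ≤ n)
    (I : Fin n → (Fin (n + 1) → ℝ) → ℝ) (hI : ∀ k, ContDiff ℝ 2 (I k))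
    (l : (Fin (n + 1) → ℝ) → (Fin (n + 1) → ℝ))
    (hl : ∀ x i, l x i = (-1 : ℝ) ^ (i : ℕ) *
      Matrix.det (Matrix.of fun (k : Fin n) (j : Fin n) =>
        fderiv ℝ (I k) x (Pi.single (i.succAbove j) 1))) :
    ∀ x : Fin (n + 1) → ℝ,
      ∑ i : Fin (n + 1), fderiv ℝ (fun y => l y i) x (Pi.single i 1) = 0 := by
  obtain ⟨m, rfl⟩ : ∃ m, n = m + 1 := ⟨n - 1, (Nat.succ_pred_eq_of_pos hn).symm⟩
  intro x
  -- second derivatives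
  have hfd : ∀ k, HasFDerivAt (fderiv ℝ (I k)) (fderiv ℝ (fderiv ℝ (I k)) x) x := fun k =>
    ((((hI k).fderiv_right (m := 1) (by norm_num)).differentiable one_ne_zero) x).hasFDerivAt
  set H : Fin (m+1) → Fin (m+2) → Fin (m+2) → ℝ := fun k a b =>
    fderiv ℝ (fderiv ℝ (I k)) x (Pi.single a 1) (Pi.single b 1) with hH
  have hsymm : ∀ k a b, H k a b = H k b a := fun k a b =>
    ((hI k).contDiffAt.isSymmSndFDerivAt (by simp [minSmoothness_of_isRCLikeNormedField])) (Pi.single a 1) (Pi.single b 1)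
  have hent : ∀ (k : Fin (m+1)) (b : Fin (m+2)),
      HasFDerivAt (fun y => fderiv ℝ (I k) y (Pi.single b 1))
        ((ContinuousLinearMap.apply ℝ ℝ (Pi.single b 1)).comp (fderiv ℝ (fderiv ℝ (I k)) x)) x :=
    fun k b => by
      have h := ((ContinuousLinearMap.apply ℝ ℝ (Pi.single b (1:ℝ))).hasFDerivAt
        (x := fderiv ℝ (I k) x)).comp x (hfd k)
      exact h
  -- the full Jacobian matrix at x
  set J : Matrix (Fin (m+1)) (Fin (m+2)) ℝ :=
    Matrix.of fun k c => fderiv ℝ (I k) x (Pi.single c 1) with hJ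
  have hli : ∀ i : Fin (m+2), fderiv ℝ (fun y => l y i) x (Pi.single i 1)
      = (-1:ℝ)^(i:ℕ) * ∑ k : Fin (m+1),
          ((J.updateRow k (H k i)).submatrix id i.succAbove).det := by
    intro i
    have hfun : (fun y => l y i) = fun y =>
        (-1:ℝ)^(i:ℕ) * (Matrix.of fun (k : Fin (m+1)) (j : Fin (m+1)) =>
          fderiv ℝ (I k) y (Pi.single (i.succAbove j) 1)).det := by
      funext y; exact hl y i
    have hdiff : DifferentiableAt ℝ (fun y =>
        (Matrix.of fun (k : Fin (m+1)) (j : Fin (m+1)) =>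
          fderiv ℝ (I k) y (Pi.single (i.succAbove j) 1)).det) x :=
      (hasFDerivAt_det' (fun k j => hent k (i.succAbove j))).differentiableAt
    rw [hfun, fderiv_const_mul hdiff]
    rw [ContinuousLinearMap.smul_apply, smul_eq_mul]
    congr 1
    have hda := fderiv_det_apply
      (A := fun y => Matrix.of fun (k : Fin (m+1)) (j : Fin (m+1)) =>
        fderiv ℝ (I k) y (Pi.single (i.succAbove j) 1))
      (fun k j => hent k (i.succAbove j)) (Pi.single i 1)
    rw [hda]
    refine Finset.sum_congr rfl fun k _ => ?_
    congr 1
    ext k' j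
    by_cases hk : k' = k
    · subst hk
      simp [Matrix.updateRow_self, ContinuousLinearMap.comp_apply,
        ContinuousLinearMap.apply_apply, hH]
    · simp [Matrix.updateRow_ne hk, Matrix.submatrix_apply, hJ]
  simp_rw [hli, Finset.mul_sum]
  rw [Finset.sum_comm]
  refine Finset.sum_eq_zero fun k _ => ?_
  exact keyC J k (H k) (hsymm k)
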